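/- Let G be a locally compact Hausdorff topological group which is unimodular, K ≤ G a compact open subgroup, and μ_G a Haar measure on G; let μ_K be the restriction of μ_G to K (so μ_K(K) = μ_G(K) > 0). Let t₁, …, t_r ∈ G be elements whose double cosets K t_i K are pairwise disjoint, and let f : G → ℝ be a continuous compactly supported function whose support is contained in the union ⋃_{i=1}^{r} K t_i K. Then ∫_G f(g) dμ_G(g) = ∑_{i=1}^{r} [K t_i K : K] · μ_K(K)^{-1} · ∫_{K×K} f(k₁ t_i k₂) dμ_K(k₁) dμ_K(k₂). -/

import Mathlib

open MeasureTheory Pointwise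

section AuxDoubleCoset

variable {G : Type*} [Group G] [TopologicalSpace G] [IsTopologicalGroup G]
    [LocallyCompactSpace G] [T2Space G] [MeasurableSpace G] [BorelSpace G]

/-- The fiber of the quotient map over `↑g` is the left coset `g • K`. -/
lemma DoubleCosetAux.fiber_eq (K : Subgroup G) (g : G) :
    (QuotientGroup.mk : G → G ⧸ K) ⁻¹' {(g : G ⧸ K)} = g • (K : Set G) := by
  ext x
  simp only [Set.mem_preimage, Set.mem_singleton_iff, Set.mem_smul_set_iff_inv_smul_mem,
    smul_eq_mul, SetLike.mem_coe]
  rw [QuotientGroup.eq]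
  constructor
  · intro h; simpa [mul_inv_rev] using K.inv_mem h
  · intro h; simpa [mul_inv_rev] using K.inv_mem h

/-- Left-translation substitution in a set integral. -/
lemma DoubleCosetAux.trans (μG : Measure G) [μG.IsMulLeftInvariant]
    (c : G) (f : G → ℝ) (s : Set G) :
    ∫ x in s, f (c * x) ∂μG = ∫ x in c • s, f x ∂μG := by
  rw [← (measurePreserving_mul_left μG c).setIntegral_image_emb
    ((MeasurableEquiv.mulLeft c).measurableEmbedding) f s]
  rfl

/-- The single-double-coset integration formula. -/
lemma DoubleCosetAux.key (μG : Measure G) [μG.IsHaarMeasure]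
    (K : Subgroup G) (hKc : IsCompact (K : Set G)) (hKo : IsOpen (K : Set G)) (t : G)
    (f : G → ℝ) (hf : Continuous f) :
    ∫ g in (K : Set G) * {t} * (K : Set G), f g ∂μG =
      (Nat.card ((QuotientGroup.mk : G → G ⧸ K) ''
          ((K : Set G) * {t} * (K : Set G))) : ℝ) *
        ((μG (K : Set G)).toReal)⁻¹ *
        ∫ k₁ in (K : Set G), ∫ k₂ in (K : Set G), f (k₁ * t * k₂) ∂μG ∂μG := by
  classical
  set mkG : G → G ⧸ K := QuotientGroup.mk with hmkG
  set S : Set G := (K : Set G) * {t} * (K : Set G) with hS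
  have hSc : IsCompact S := (hKc.mul isCompact_singleton).mul hKc
  have hSo : IsOpen S := hKo.mul_left
  have h1K : (1 : G) ∈ (K : Set G) := K.one_mem
  have hmemS : ∀ k₁ ∈ (K : Set G), ∀ k₂ ∈ (K : Set G), k₁ * t * k₂ ∈ S :=
    fun k₁ h₁ k₂ h₂ => Set.mul_mem_mul (Set.mul_mem_mul h₁ (Set.mem_singleton t)) h₂
  have htS : t ∈ S := by simpa using hmemS 1 h1K 1 h1K
  have hSK : S * (K : Set G) = S := by
    rw [hS, mul_assoc ((K : Set G) * {t}), coe_mul_coe]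
  have absorb : ∀ x ∈ S, ∀ k ∈ (K : Set G), x * k ∈ S := fun x hx k hk => by
    rw [← hSK]; exact Set.mul_mem_mul hx hk
  have fiber_sub : ∀ x ∈ S, mkG ⁻¹' {mkG x} ⊆ S := by
    intro x hx y hy
    rw [hmkG, DoubleCosetAux.fiber_eq K x] at hy
    obtain ⟨k, hk, rfl⟩ := hy
    exact absorb x hx k hk
  set Q : Set (G ⧸ K) := mkG '' S with hQ
  have hmk_smul : ∀ (x y : G), y ∈ x • (K : Set G) → mkG y = mkG x := by
    intro x y hy
    obtain ⟨k, hk, rfl⟩ := hy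
    exact (QuotientGroup.eq (s := K)).mpr (by simpa using hk) |>.symm
  have hQfin : Q.Finite := by
    obtain ⟨T, hT⟩ := hSc.elim_finite_subcover (fun x : S => (x : G) • (K : Set G))
      (fun x => hKo.smul _)
      (fun y hy => Set.mem_iUnion.2 ⟨⟨y, hy⟩, ⟨1, h1K, mul_one y⟩⟩)
    have hsub : Q ⊆ ⋃ x ∈ T, {mkG (x : G)} := by
      rintro _ ⟨y, hy, rfl⟩
      obtain ⟨x, hxT, hx⟩ := Set.mem_iUnion₂.1 (hT hy)
      exact Set.mem_biUnion hxT (hmk_smul _ _ hx)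
    exact ((T.finite_toSet.biUnion fun _ _ => Set.finite_singleton _)).subset hsub
  set QF : Finset (G ⧸ K) := hQfin.toFinset with hQF
  have hmemQF : ∀ q, q ∈ QF ↔ q ∈ Q := fun q => hQfin.mem_toFinset
  -- representatives
  have rep : ∀ q ∈ Q, ∃ k ∈ (K : Set G), mkG (k * t) = q := by
    rintro _ ⟨y, hy, rfl⟩
    obtain ⟨a, ha, k₂, hk₂, rfl⟩ := hy
    obtain ⟨k₁, hk₁, s, hs, rfl⟩ := ha
    rw [Set.mem_singleton_iff] at hs
    refine ⟨k₁, hk₁, ?_⟩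
    rw [← hs]
    refine (QuotientGroup.eq (s := K)).mpr ?_
    have h2 : (k₁ * s)⁻¹ * (k₁ * s * k₂) = k₂ := by group
    rw [h2]; simpa using hk₂
  have rep' : ∀ q : G ⧸ K, ∃ k : G, q ∈ Q → (k ∈ (K : Set G) ∧ mkG (k * t) = q) := by
    intro q
    by_cases hq : q ∈ Q
    · obtain ⟨k, hk1, hk2⟩ := rep q hq; exact ⟨k, fun _ => ⟨hk1, hk2⟩⟩
    · exact ⟨1, fun h => absurd h hq⟩
  choose κ hκ using rep'
  -- fibers inside K
  set A : G ⧸ K → Set G := fun q => (K : Set G) ∩ ((· * t) ⁻¹' (mkG ⁻¹' {q})) with hA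
  have hAopen : ∀ g : G, IsOpen (A (mkG g)) := by
    intro g
    have : IsOpen (mkG ⁻¹' {mkG g}) := by
      rw [hmkG, DoubleCosetAux.fiber_eq K g]; exact hKo.smul g
    exact hKo.inter (this.preimage (continuous_mul_right t))
  have hAopen' : ∀ q : G ⧸ K, IsOpen (A q) := by
    intro q
    obtain ⟨g, rfl⟩ := QuotientGroup.mk_surjective q
    exact hAopen g
  have hAmeas : ∀ q, MeasurableSet (A q) := fun q => (hAopen' q).measurableSet
  have hAmem : ∀ (x : G) (q : G ⧸ K), x ∈ A q ↔ x ∈ (K : Set G) ∧ mkG (x * t) = q := by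
    intro x q
    simp [hA]
  have hAdisj : ∀ q q' : G ⧸ K, q ≠ q' → Disjoint (A q) (A q') := by
    intro q q' h
    refine Set.disjoint_left.mpr fun x hx hx' => h ?_
    rw [hAmem] at hx hx'
    exact hx.2.symm.trans hx'.2
  have hAsub : ∀ q, A q ⊆ (K : Set G) := fun q => Set.inter_subset_left
  have hKA : (K : Set G) = ⋃ q ∈ QF, A q := by
    ext x
    constructor
    · intro hx
      have hxt : x * t ∈ S := by simpa using hmemS x hx 1 h1K
      refine Set.mem_biUnion ((hmemQF _).2 ⟨x * t, hxt, rfl⟩) ?_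
      rw [hAmem]; exact ⟨hx, rfl⟩
    · intro hx
      obtain ⟨q, _, hxq⟩ := Set.mem_iUnion₂.1 hx
      exact hAsub q hxq
  -- all fibers have the same measure
  have hAtrans : ∀ q ∈ Q, A q = κ q • A (mkG t) := by
    intro q hq
    obtain ⟨hκK, hκq⟩ := hκ q hq
    ext x
    rw [Set.mem_smul_set_iff_inv_smul_mem, smul_eq_mul, hAmem, hAmem]
    have key₁ : (mkG (x * t) = mkG (κ q * t)) ↔ (mkG ((κ q)⁻¹ * x * t) = mkG t) := by
      rw [hmkG, QuotientGroup.eq, QuotientGroup.eq]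
      have : (x * t)⁻¹ * (κ q * t) = ((κ q)⁻¹ * x * t)⁻¹ * t := by group
      rw [this]
    constructor
    · rintro ⟨hxK, hxq⟩
      exact ⟨K.mul_mem (K.inv_mem hκK) hxK, key₁.1 (by rw [hxq, hκq])⟩
    · rintro ⟨hxK, hxq⟩
      have hx : x ∈ K := by simpa [mul_inv_cancel_left] using K.mul_mem hκK hxK
      exact ⟨hx, by rw [← hκq]; exact key₁.2 hxq⟩
  set m : ENNReal := μG (A (mkG t)) with hm
  have hAμ : ∀ q ∈ Q, μG (A q) = m := by
    intro q hq
    rw [hAtrans q hq, measure_smul]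
  have hm_lt : m < ⊤ := lt_of_le_of_lt (measure_mono (hAsub _)) hKc.measure_lt_top
  have hm_pos : 0 < m := by
    refine (hAopen' (mkG t)).measure_pos μG ⟨1, ?_⟩
    rw [hAmem]; exact ⟨h1K, by rw [one_mul]⟩
  have hμK : μG (K : Set G) = QF.card • m := by
    rw [hKA, measure_biUnion_finset
      (fun q hq q' hq' h => hAdisj q q' h) (fun q _ => hAmeas q)]
    rw [Finset.sum_congr rfl fun q hq => hAμ q ((hmemQF q).1 hq), Finset.sum_const]
  -- fiber integrals
  have hfib_int : ∀ g : G, IntegrableOn f (mkG ⁻¹' {mkG g}) μG := by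
    intro g
    rw [hmkG, DoubleCosetAux.fiber_eq K g]
    exact hf.continuousOn.integrableOn_compact (hKc.smul g)
  have hfib_meas : ∀ q : G ⧸ K, MeasurableSet (mkG ⁻¹' {q}) := by
    intro q
    obtain ⟨g, rfl⟩ := QuotientGroup.mk_surjective q
    rw [hmkG, DoubleCosetAux.fiber_eq K g]
    exact (hKo.smul g).measurableSet
  have hfib_disj : ∀ q q' : G ⧸ K, q ≠ q' → Disjoint (mkG ⁻¹' {q}) (mkG ⁻¹' {q'}) :=
    fun q q' h => Set.disjoint_left.mpr fun x hx hx' =>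
      h ((Set.mem_singleton_iff.1 hx).symm.trans (Set.mem_singleton_iff.1 hx'))
  have hSfib : S = ⋃ q ∈ QF, mkG ⁻¹' {q} := by
    ext x
    constructor
    · intro hx
      exact Set.mem_biUnion ((hmemQF _).2 ⟨x, hx, rfl⟩) rfl
    · intro hx
      obtain ⟨q, hq, hxq⟩ := Set.mem_iUnion₂.1 hx
      obtain ⟨y, hyS, rfl⟩ := (hmemQF q).1 hq
      exact fiber_sub y hyS hxq
  have hSsum : ∫ g in S, f g ∂μG = ∑ q ∈ QF, ∫ g in mkG ⁻¹' {q}, f g ∂μG := by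
    rw [hSfib, integral_biUnion_finset QF (fun q _ => hfib_meas q)
      (fun q _ q' _ h => hfib_disj q q' h) ?_]
    intro q hq
    obtain ⟨y, _, rfl⟩ := (hmemQF q).1 hq
    exact hfib_int y
  -- inner integral
  have hinner : ∀ k₁ : G, (∫ k₂ in (K : Set G), f (k₁ * t * k₂) ∂μG) =
      ∫ x in mkG ⁻¹' {mkG (k₁ * t)}, f x ∂μG := by
    intro k₁
    rw [hmkG, DoubleCosetAux.fiber_eq K (k₁ * t)]
    exact DoubleCosetAux.trans μG (k₁ * t) f (K : Set G)
  have houter : (∫ k₁ in (K : Set G), ∫ k₂ in (K : Set G), f (k₁ * t * k₂) ∂μG ∂μG)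
      = ∑ q ∈ QF, (μG (A q)).toReal • (∫ x in mkG ⁻¹' {q}, f x ∂μG) := by
    set F : G → ℝ := fun k₁ => ∫ k₂ in (K : Set G), f (k₁ * t * k₂) ∂μG with hF
    have hFeq : ∀ q : G ⧸ K, ∀ k₁ ∈ A q,
        F k₁ = ∫ x in mkG ⁻¹' {q}, f x ∂μG := by
      intro q k₁ hk₁
      rw [hAmem] at hk₁
      simp only [hF]
      rw [hinner k₁, hk₁.2]
    rw [hKA]
    rw [integral_biUnion_finset QF (fun q _ => hAmeas q)
      (fun q _ q' _ h => hAdisj q q' h) ?_]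
    · refine Finset.sum_congr rfl fun q hq => ?_
      rw [setIntegral_congr_fun (hAmeas q) (fun k hk => hFeq q k hk), setIntegral_const, measureReal_def]
    · intro q _
      refine IntegrableOn.congr_fun ?_ (fun k hk => (hFeq q k hk).symm) (hAmeas q)
      exact integrableOn_const (ne_of_lt (lt_of_le_of_lt (measure_mono (hAsub q))
        hKc.measure_lt_top))
  -- put everything together
  have hcard : (Nat.card Q : ℝ) = (QF.card : ℝ) := by
    rw [Nat.card_coe_set_eq, Set.ncard_eq_toFinset_card Q hQfin]
  have hmR_pos : 0 < m.toReal := ENNReal.toReal_pos hm_pos.ne' hm_lt.ne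
  have hn_pos : 0 < QF.card := Finset.card_pos.2 ⟨mkG t, (hmemQF _).2 ⟨t, htS, rfl⟩⟩
  have hμKR : (μG (K : Set G)).toReal = (QF.card : ℝ) * m.toReal := by
    rw [hμK, nsmul_eq_mul, ENNReal.toReal_mul, ENNReal.toReal_natCast]
  rw [houter, hSsum]
  have hsum_smul : ∑ q ∈ QF, (μG (A q)).toReal • (∫ x in mkG ⁻¹' {q}, f x ∂μG)
      = m.toReal * ∑ q ∈ QF, ∫ x in mkG ⁻¹' {q}, f x ∂μG := by
    rw [Finset.mul_sum]
    refine Finset.sum_congr rfl fun q hq => ?_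
    rw [hAμ q ((hmemQF q).1 hq), smul_eq_mul]
  rw [hsum_smul, hcard, hμKR]
  have hnR : (QF.card : ℝ) ≠ 0 := Nat.cast_ne_zero.2 hn_pos.ne'
  have hmR : m.toReal ≠ 0 := hmR_pos.ne'
  field_simp

end AuxDoubleCoset

/-- **Integration formula over a finite union of double cosets.**
Let `G` be a locally compact Hausdorff unimodular topological group, `K ≤ G` a compact
open subgroup, `μG` a Haar measure on `G`, and let `μK` be the restriction of `μG` to `K`
(formalized by set integrals over `K` against `μG`). Let `t₁, …, t_r ∈ G` have pairwise
disjoint double cosets `K tᵢ K`, and let `f : G → ℝ` be continuous compactly supported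
with support in `⋃ᵢ K tᵢ K`. Then
`∫_G f dμG = ∑ᵢ [K tᵢ K : K] * μK(K)⁻¹ * ∫_{K×K} f(k₁ tᵢ k₂) dμK dμK`,
where `[K tᵢ K : K]` is the number of left cosets of `K` contained in `K tᵢ K`. -/
theorem integration_formula_over_double_cosets
    {G : Type*} [Group G] [TopologicalSpace G] [IsTopologicalGroup G]
    [LocallyCompactSpace G] [T2Space G] [MeasurableSpace G] [BorelSpace G]
    (μG : Measure G) [μG.IsHaarMeasure] [μG.IsMulRightInvariant]
    (K : Subgroup G) (hKc : IsCompact (K : Set G)) (hKo : IsOpen (K : Set G))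
    (r : ℕ) (t : Fin r → G)
    (hdisj : Pairwise fun i j =>
      Disjoint ((K : Set G) * {t i} * (K : Set G)) ((K : Set G) * {t j} * (K : Set G)))
    (f : G → ℝ) (hf : Continuous f) (hfc : HasCompactSupport f)
    (hsupp : tsupport f ⊆ ⋃ i, (K : Set G) * {t i} * (K : Set G)) :
    ∫ g, f g ∂μG =
      ∑ i : Fin r,
        (Nat.card ((QuotientGroup.mk : G → G ⧸ K) ''
            ((K : Set G) * {t i} * (K : Set G))) : ℝ) *
          ((μG (K : Set G)).toReal)⁻¹ *
          ∫ k₁ in (K : Set G), ∫ k₂ in (K : Set G), f (k₁ * t i * k₂) ∂μG ∂μG := by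
  have hSo : ∀ i, IsOpen ((K : Set G) * {t i} * (K : Set G)) := fun i => hKo.mul_left
  have hSc : ∀ i, IsCompact ((K : Set G) * {t i} * (K : Set G)) :=
    fun i => (hKc.mul isCompact_singleton).mul hKc
  have hsub : Function.support f ⊆ ⋃ i, (K : Set G) * {t i} * (K : Set G) :=
    (subset_tsupport f).trans hsupp
  have h1 : ∫ g, f g ∂μG = ∫ g in ⋃ i, (K : Set G) * {t i} * (K : Set G), f g ∂μG := by
    rw [← integral_indicator (MeasurableSet.iUnion fun i => (hSo i).measurableSet),
      Set.indicator_eq_self.2 hsub]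
  rw [h1, integral_iUnion_fintype (fun i => (hSo i).measurableSet) hdisj
    (fun i => hf.continuousOn.integrableOn_compact (hSc i))]
  exact Finset.sum_congr rfl fun i _ => DoubleCosetAux.key μG K hKc hKo (t i) f hf
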